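/- Let Y and Z be real-valued random variables on a common probability space whose marginal laws are atomless, with cumulative distribution functions F_Y and F_Z, and set Ỹ = F_Y(Y) and Z̃ = F_Z(Z). Then Y and Z are independent if and only if E[γ_z^⊥(Z̃)·γ_y^⊥(Ỹ)] = 0 for all (y,z) ∈ [0,1]². -/

import Mathlib

open MeasureTheory ProbabilityTheory Set Filter MeasurableSpace
open scoped Topology ENNReal NNReal

set_option linter.unusedSectionVars false

noncomputable section

namespace Stmt4Aux

section CDFStuff
variable (μ : Measure ℝ) [IsProbabilityMeasure μ]
lemma cdf_measurable : Measurable (cdf μ) := (cdf μ).mono.measurable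

/-- with no atoms, the cdf is left-continuous hence equal to its left limit -/
lemma leftLim_cdf_eq (hat : ∀ a : ℝ, μ {a} = 0) (c : ℝ) :
    Function.leftLim (cdf μ) c = cdf μ c := by
  have h1 : Function.leftLim (cdf μ) c ≤ cdf μ c := (cdf μ).mono.leftLim_le le_rfl
  have h2 : (cdf μ).measure {c} = ENNReal.ofReal (cdf μ c - Function.leftLim (cdf μ) c) :=
    StieltjesFunction.measure_singleton _ c
  rw [measure_cdf, hat c] at h2
  have := (ENNReal.ofReal_eq_zero).mp h2.symm
  linarith

/-- the "flat part to the right of a" is null -/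
lemma flat_null (hat : ∀ a : ℝ, μ {a} = 0) (a : ℝ) :
    μ {x | a < x ∧ cdf μ x ≤ cdf μ a} = 0 := by
  set S := {x | a < x ∧ cdf μ x ≤ cdf μ a} with hS
  have hIoc : ∀ x ∈ S, μ (Ioc a x) = 0 := by
    intro x hx
    have hxx : μ (Iic x) = μ (Iic a) := by
      have h1 : cdf μ x = cdf μ a := le_antisymm hx.2 ((cdf μ).mono hx.1.le)
      rw [← ofReal_cdf μ x, ← ofReal_cdf μ a, h1]
    have : Ioc a x = Iic x \ Iic a := by
      ext t; simp [Set.mem_Ioc, Set.mem_diff, and_comm]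
    rw [this, measure_diff (Iic_subset_Iic.2 hx.1.le) nullMeasurableSet_Iic
      (measure_ne_top μ _), hxx, tsub_self]
  have hsub : S ⊆ {sSup S} ∪ ⋃ (q : ℚ) (_ : (q : ℝ) ∈ S), Ioc a q := by
    intro x hx
    by_cases hup : ∃ x' ∈ S, x < x'
    · obtain ⟨x', hx', hxx'⟩ := hup
      obtain ⟨q, hq1, hq2⟩ := exists_rat_btwn hxx'
      have hqS : (q : ℝ) ∈ S := ⟨hx.1.trans hq1, le_trans ((cdf μ).mono hq2.le) hx'.2⟩
      exact Or.inr (Set.mem_iUnion₂.2 ⟨q, hqS, hx.1, hq1.le⟩)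
    · push_neg at hup
      have : x = sSup S :=
        le_antisymm (le_csSup ⟨x, hup⟩ hx) (csSup_le ⟨x, hx⟩ hup)
      exact Or.inl this
  refine measure_mono_null hsub (measure_union_null (hat _) ?_)
  exact measure_iUnion_null fun q => measure_iUnion_null fun hq => hIoc _ hq


lemma map_cdf_eq_uniform (hat : ∀ a : ℝ, μ {a} = 0) :
    μ.map (cdf μ) = volume.restrict (Icc (0:ℝ) 1) := by
  have hmeas : Measurable (cdf μ) := (cdf μ).mono.measurable
  have hIP : IsProbabilityMeasure (volume.restrict (Icc (0:ℝ) 1)) := by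
    constructor
    simp [Real.volume_Icc]
  refine Measure.ext_of_Iic _ _ (fun u => ?_)
  rw [Measure.map_apply hmeas measurableSet_Iic]
  have hpre : cdf μ ⁻¹' Iic u = {x | cdf μ x ≤ u} := rfl
  rw [hpre]
  rw [Measure.restrict_apply measurableSet_Iic]
  rcases lt_or_ge u 0 with hu | hu
  · have h1 : {x | cdf μ x ≤ u} = ∅ := by
      ext x; simp only [Set.mem_setOf_eq, Set.mem_empty_iff_false, iff_false, not_le]
      exact lt_of_lt_of_le hu (cdf_nonneg μ x)
    have h2 : Iic u ∩ Icc (0:ℝ) 1 = ∅ := by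
      ext x; simp only [Set.mem_inter_iff, Set.mem_Iic, Set.mem_Icc, Set.mem_empty_iff_false,
        iff_false]
      rintro ⟨h3, h4, -⟩; linarith
    rw [h1, h2]
    simp
  rcases le_or_gt 1 u with hu1 | hu1
  · have h1 : {x | cdf μ x ≤ u} = univ := by
      ext x; simp only [Set.mem_setOf_eq, Set.mem_univ, iff_true]
      exact (cdf_le_one μ x).trans hu1
    have h2 : Iic u ∩ Icc (0:ℝ) 1 = Icc 0 1 := by
      rw [Set.inter_eq_right]; exact fun x hx => le_trans hx.2 hu1
    rw [h1, h2, Real.volume_Icc, measure_univ]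
    norm_num
  · -- 0 ≤ u < 1
    have h2 : Iic u ∩ Icc (0:ℝ) 1 = Icc 0 u := by
      ext x; simp only [Set.mem_inter_iff, Set.mem_Iic, Set.mem_Icc]
      constructor
      · rintro ⟨h3, h4, -⟩; exact ⟨h4, h3⟩
      · rintro ⟨h3, h4⟩; exact ⟨h4, h3, le_of_lt (lt_of_le_of_lt h4 hu1)⟩
    rw [h2, Real.volume_Icc]
    set A := {x | cdf μ x ≤ u} with hA
    -- there is b with cdf μ b > u
    obtain ⟨b, hb⟩ : ∃ b, u < cdf μ b := by
      by_contra h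
      push_neg at h
      have := le_of_tendsto (tendsto_cdf_atTop μ) (Eventually.of_forall h)
      linarith
    rcases eq_empty_or_nonempty A with hAe | hAne
    · have hu0 : u = 0 := by
        rcases lt_or_eq_of_le hu with h0 | h0
        · exfalso
          obtain ⟨x, hx⟩ := (((tendsto_cdf_atBot μ).eventually_lt_const h0).exists)
          exact (Set.eq_empty_iff_forall_notMem.mp hAe) x hx.le
        · exact h0.symm
      rw [hAe, hu0]
      simp
    · have hbdd : BddAbove A := by
        refine ⟨b, fun x hx => ?_⟩
        by_contra h
        push_neg at h
        exact absurd (le_trans ((cdf μ).mono h.le) hx) (not_le.2 hb)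
      set c := sSup A with hc
      have hsub1 : Iio c ⊆ A := by
        intro x hx
        obtain ⟨a, ha, hxa⟩ := exists_lt_of_lt_csSup hAne hx
        exact le_trans ((cdf μ).mono hxa.le) ha
      have hsub2 : A ⊆ Iic c := fun x hx => le_csSup hbdd hx
      -- cdf μ c = u
      have hge : u ≤ cdf μ c := by
        -- right continuity: for x > c, cdf x > u
        have hrc : Tendsto (cdf μ) (𝓝[>] c) (𝓝 (cdf μ c)) :=
          ((cdf μ).right_continuous c).tendsto.mono_left (nhdsWithin_mono _ Ioi_subset_Ici_self)
        refine ge_of_tendsto hrc ?_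
        filter_upwards [self_mem_nhdsWithin] with x hx
        by_contra h
        push_neg at h
        exact absurd (hsub2 h.le) (not_le.2 (show c < x from hx))
      have hle : cdf μ c ≤ u := by
        rw [← leftLim_cdf_eq μ hat c]  -- defined above
        refine le_of_tendsto ((cdf μ).mono.tendsto_leftLim c) ?_
        filter_upwards [self_mem_nhdsWithin] with x hx
        exact hsub1 hx
      have hcu : cdf μ c = u := le_antisymm hle hge
      have hμA : μ A = μ (Iic c) := by
        refine le_antisymm (measure_mono hsub2) ?_
        have : μ (Iic c) ≤ μ (Iio c) + μ {c} := by
          rw [← Iio_union_right (a := c)] at *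
          exact measure_union_le _ _
        rw [hat c, add_zero] at this
        exact this.trans (measure_mono hsub1)
      rw [hμA, ← ofReal_cdf μ c, hcu]
      simp [max_eq_left hu]


lemma exp_integral_uniform (y : ℝ) (hy : y ≠ 0) :
    ∫ t in Icc (0:ℝ) 1, Real.exp (y * t) = (Real.exp y - 1) / y := by
  rw [integral_Icc_eq_integral_Ioc, ← intervalIntegral.integral_of_le zero_le_one]
  have hd : ∀ x ∈ Set.uIcc (0:ℝ) 1, HasDerivAt (fun t => Real.exp (y * t) / y)
      (Real.exp (y * x)) x := by
    intro x _
    have h1 : HasDerivAt (fun t : ℝ => y * t) y x := by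
      simpa using (hasDerivAt_id x).const_mul y
    have h2 : HasDerivAt (fun t => Real.exp (y * t)) (Real.exp (y * x) * y) x := h1.exp
    have h3 := h2.div_const y
    simpa [mul_div_assoc, mul_div_cancel_right₀ _ hy] using h3
  rw [intervalIntegral.integral_eq_sub_of_hasDerivAt hd]
  · simp [mul_comm]
    ring
  · exact (Real.continuous_exp.comp (continuous_const.mul continuous_id)).intervalIntegrable 0 1

lemma events_ae_eq {Ω : Type*} [MeasurableSpace Ω] (P : Measure Ω) [IsProbabilityMeasure P]
    (Y : Ω → ℝ) (hY : Measurable Y) (hmap : P.map Y = μ) (hat : ∀ a : ℝ, μ {a} = 0) (a : ℝ) :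
    {ω | Y ω ≤ a} =ᵐ[P] {ω | cdf μ (Y ω) ≤ cdf μ a} := by
  have hmeas : Measurable (cdf μ) := (cdf μ).mono.measurable
  rw [Filter.eventuallyEq_set]
  have hnull : P (Y ⁻¹' {x | a < x ∧ cdf μ x ≤ cdf μ a}) = 0 := by
    rw [← Measure.map_apply hY (by
      exact (measurableSet_lt measurable_const measurable_id).inter
        (measurableSet_le hmeas measurable_const)), hmap]
    exact flat_null μ hat a
  filter_upwards [measure_eq_zero_iff_ae_notMem.mp hnull] with ω hω
  constructor
  · exact fun h => (cdf μ).mono h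
  · intro h
    by_contra hc
    push_neg at hc
    exact hω ⟨hc, h⟩


end CDFStuff

section ProbStuff
variable {Ω : Type*} [MeasurableSpace Ω] (P : Measure Ω) [IsProbabilityMeasure P]

/-- entire functions agreeing on [1/2,1] ⊆ ℝ agree everywhere -/
lemma entire_eq_of_eq_on_Icc {f g : ℂ → ℂ} (hf : Differentiable ℂ f) (hg : Differentiable ℂ g)
    (h : ∀ x : ℝ, x ∈ Icc (1/2 : ℝ) 1 → f x = g x) : ∀ w : ℂ, f w = g w := by
  have hana : AnalyticOnNhd ℂ (f - g) univ :=
    (Complex.analyticOnNhd_univ_iff_differentiable).2 (hf.sub hg)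
  have hmem : ∀ n : ℕ, (3/4 + (1/4) * (1/(n+1)) : ℝ) ∈ Icc (1/2 : ℝ) 1 := by
    intro n
    have hpos : (0:ℝ) < (n:ℝ)+1 := by positivity
    have h1 : (0:ℝ) < 1/((n:ℝ)+1) := by positivity
    have h2 : (1 : ℝ)/((n:ℝ)+1) ≤ 1 := by
      rw [div_le_one hpos]; simp [Nat.cast_nonneg]
    constructor <;> nlinarith
  have hfreq : ∃ᶠ z in 𝓝[≠] (3/4 : ℂ), (f - g) z = 0 := by
    have htends : Tendsto (fun n : ℕ => ((3/4 + (1/4) * (1/(n+1)) : ℝ) : ℂ)) atTop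
        (𝓝[≠] (3/4 : ℂ)) := by
      apply tendsto_nhdsWithin_of_tendsto_nhds_of_eventually_within
      · have h0 : Tendsto (fun n : ℕ => (3/4 + (1/4) * (1/(n+1)) : ℝ)) atTop (𝓝 (3/4 : ℝ)) := by
          have := tendsto_one_div_add_atTop_nhds_zero_nat (𝕜 := ℝ)
          have h2 := (this.const_mul (1/4 : ℝ)).const_add (3/4 : ℝ)
          simpa using h2
        have hc := (Complex.continuous_ofReal.tendsto (3/4 : ℝ)).comp h0
        have : ((3/4 : ℝ) : ℂ) = (3/4 : ℂ) := by norm_num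
        rw [this] at hc
        exact hc
      · filter_upwards with n
        simp only [Set.mem_compl_iff, Set.mem_singleton_iff]
        intro hcontra
        have h34 : ((3/4 : ℝ) : ℂ) = (3/4 : ℂ) := by norm_num
        rw [← h34] at hcontra
        have hre := Complex.ofReal_injective hcontra
        have h1 : (0:ℝ) < 1/((n:ℝ)+1) := by positivity
        nlinarith
    apply htends.frequently
    refine Filter.Frequently.of_forall (fun n => ?_)
    have := h _ (hmem n)
    push_cast at this
    simpa [Pi.sub_apply, sub_eq_zero] using this
  have := hana.eqOn_zero_of_preconnected_of_frequently_eq_zero isPreconnected_univ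
    (Set.mem_univ _) hfreq
  intro w
  have hw := this (Set.mem_univ w)
  have : f w - g w = 0 := hw
  exact sub_eq_zero.mp this




lemma norm_cexp_le {V W : Ω → ℝ} (hVb : ∀ ω, V ω ∈ Icc (0:ℝ) 1) (hWb : ∀ ω, W ω ∈ Icc (0:ℝ) 1)
    (w z : ℂ) (ω : Ω) :
    ‖Complex.exp (w * V ω + z * W ω)‖ ≤ Real.exp (‖w‖ + ‖z‖) := by
  rw [Complex.norm_exp, Real.exp_le_exp]
  have h3 := (hVb ω).1; have h4 := (hVb ω).2
  have h5 := (hWb ω).1; have h6 := (hWb ω).2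
  have h7 : |w.re| ≤ ‖w‖ := Complex.abs_re_le_norm w
  have h8 : |z.re| ≤ ‖z‖ := Complex.abs_re_le_norm z
  have hre : (w * (V ω : ℂ) + z * (W ω : ℂ)).re = w.re * V ω + z.re * W ω := by simp
  rw [hre]
  have h9 : w.re * V ω ≤ ‖w‖ := by nlinarith [abs_le.mp h7]
  have h10 : z.re * W ω ≤ ‖z‖ := by nlinarith [abs_le.mp h8]
  linarith

lemma meas_cexp {V W : Ω → ℝ} (hV : Measurable V) (hW : Measurable W) (w z : ℂ) :
    Measurable (fun ω => Complex.exp (w * V ω + z * W ω)) :=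
  Complex.measurable_exp.comp ((measurable_const.mul
    (Complex.measurable_ofReal.comp hV)).add (measurable_const.mul
    (Complex.measurable_ofReal.comp hW)))

lemma integrable_cexp {V W : Ω → ℝ} (hV : Measurable V) (hW : Measurable W)
    (hVb : ∀ ω, V ω ∈ Icc (0:ℝ) 1) (hWb : ∀ ω, W ω ∈ Icc (0:ℝ) 1) (w z : ℂ) :
    Integrable (fun ω => Complex.exp (w * V ω + z * W ω)) P := by
  refine (integrable_const (Real.exp (‖w‖ + ‖z‖))).mono'
    (meas_cexp hV hW w z).aestronglyMeasurable ?_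
  filter_upwards with ω
  exact norm_cexp_le hVb hWb w z ω

lemma diff_cexp_integral {V W : Ω → ℝ} (hV : Measurable V) (hW : Measurable W)
    (hVb : ∀ ω, V ω ∈ Icc (0:ℝ) 1) (hWb : ∀ ω, W ω ∈ Icc (0:ℝ) 1) (z : ℂ) :
    Differentiable ℂ (fun w => ∫ ω, Complex.exp (w * V ω + z * W ω) ∂P) := by
  intro w₀
  have key := hasDerivAt_integral_of_dominated_loc_of_deriv_le
    (F := fun (w : ℂ) (ω : Ω) => Complex.exp (w * V ω + z * W ω))
    (F' := fun (w : ℂ) (ω : Ω) => Complex.exp (w * V ω + z * W ω) * (V ω : ℂ))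
    (μ := P) (x₀ := w₀) (s := Metric.ball w₀ 1)
    (bound := fun _ => Real.exp (‖w₀‖ + 1 + ‖z‖))
    (Metric.ball_mem_nhds w₀ one_pos)
    (Filter.Eventually.of_forall fun w => (meas_cexp hV hW w z).aestronglyMeasurable)
    (integrable_cexp P hV hW hVb hWb w₀ z)
    ((meas_cexp hV hW w₀ z).mul (Complex.measurable_ofReal.comp hV)).aestronglyMeasurable
    ?_ (integrable_const _) ?_
  · exact key.2.differentiableAt
  · filter_upwards with ω
    intro w hw
    have h1 : ‖Complex.exp (w * V ω + z * W ω) * (V ω : ℂ)‖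
        ≤ ‖Complex.exp (w * V ω + z * W ω)‖ * 1 := by
      rw [norm_mul]
      gcongr
      rw [Complex.norm_real, Real.norm_eq_abs, abs_le]
      exact ⟨by linarith [(hVb ω).1], (hVb ω).2⟩
    have h2 := norm_cexp_le hVb hWb w z ω
    have h3 : ‖w‖ ≤ ‖w₀‖ + 1 := by
      have := mem_closedBall_iff_norm.mp (Metric.ball_subset_closedBall hw)
      calc ‖w‖ = ‖w₀ + (w - w₀)‖ := by ring_nf
        _ ≤ ‖w₀‖ + ‖w - w₀‖ := norm_add_le _ _
        _ ≤ ‖w₀‖ + 1 := by linarith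
    have h4 : Real.exp (‖w‖ + ‖z‖) ≤ Real.exp (‖w₀‖ + 1 + ‖z‖) := by
      rw [Real.exp_le_exp]; linarith
    calc ‖Complex.exp (w * V ω + z * W ω) * (V ω : ℂ)‖
        ≤ ‖Complex.exp (w * V ω + z * W ω)‖ * 1 := h1
      _ = ‖Complex.exp (w * V ω + z * W ω)‖ := mul_one _
      _ ≤ Real.exp (‖w‖ + ‖z‖) := h2
      _ ≤ _ := h4
  · filter_upwards with ω
    intro w hw
    have h1 : HasDerivAt (fun w : ℂ => w * V ω + z * W ω) (V ω : ℂ) w := by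
      simpa using ((hasDerivAt_id w).mul_const ((V ω : ℂ))).add_const (z * W ω)
    simpa using h1.cexp

end ProbStuff

abbrev I01 : Type := ↥(Set.Icc (0:ℝ) 1)
abbrev K2 : Type := I01 × I01

noncomputable def expCM (y z : ℝ) : C(K2, ℝ) :=
  ⟨fun p => Real.exp (y * (p.1 : ℝ) + z * (p.2 : ℝ)), by
    apply Real.continuous_exp.comp
    exact ((continuous_const.mul (continuous_subtype_val.comp continuous_fst)).add
      (continuous_const.mul (continuous_subtype_val.comp continuous_snd)))⟩

def expSubmonoid : Submonoid C(K2, ℝ) where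
  carrier := {g | ∃ y z : ℝ, 0 ≤ y ∧ 0 ≤ z ∧ g = expCM y z}
  one_mem' := ⟨0, 0, le_rfl, le_rfl, by ext p; simp [expCM]⟩
  mul_mem' := by
    rintro a b ⟨y1, z1, hy1, hz1, rfl⟩ ⟨y2, z2, hy2, hz2, rfl⟩
    refine ⟨y1 + y2, z1 + z2, by linarith, by linarith, ?_⟩
    ext p
    simp only [ContinuousMap.mul_apply, expCM, ContinuousMap.coe_mk, ← Real.exp_add]
    ring_nf

lemma integrable_cm (κ : Measure K2) [IsFiniteMeasure κ] (g : C(K2, ℝ)) :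
    Integrable (fun p => g p) κ := by
  refine (integrable_const ‖g‖).mono' g.continuous.measurable.aestronglyMeasurable ?_
  filter_upwards with p
  exact g.norm_coe_le_norm p



section PairSection
variable {Ω : Type*} [MeasurableSpace Ω] (P : Measure Ω) [IsProbabilityMeasure P]
lemma map_pair_eq_prod (V W : Ω → I01) (hV : Measurable V) (hW : Measurable W)
    (H : ∀ y z : ℝ, 0 ≤ y → 0 ≤ z →
      ∫ ω, Real.exp (y * (V ω : ℝ) + z * (W ω : ℝ)) ∂P
        = (∫ ω, Real.exp (y * (V ω : ℝ)) ∂P) * (∫ ω, Real.exp (z * (W ω : ℝ)) ∂P)) :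
    P.map (fun ω => (V ω, W ω)) = (P.map V).prod (P.map W) := by
  set μ : Measure K2 := P.map (fun ω => (V ω, W ω)) with hμ
  set ν : Measure K2 := (P.map V).prod (P.map W) with hν
  have hVW : Measurable (fun ω => (V ω, W ω)) := hV.prodMk hW
  have hμP : IsProbabilityMeasure μ := Measure.isProbabilityMeasure_map hVW.aemeasurable
  have hVP : IsProbabilityMeasure (P.map V) := Measure.isProbabilityMeasure_map hV.aemeasurable
  have hWP : IsProbabilityMeasure (P.map W) := Measure.isProbabilityMeasure_map hW.aemeasurable
  have hνP : IsProbabilityMeasure ν := by infer_instance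
  -- integrals of continuous functions agree
  have hint : ∀ g : C(K2, ℝ), ∫ p, g p ∂μ = ∫ p, g p ∂ν := by
    have hspan : ∀ g ∈ Submodule.span ℝ (expSubmonoid : Set C(K2, ℝ)),
        ∫ p, g p ∂μ = ∫ p, g p ∂ν := by
      intro g hg'
      induction hg' using Submodule.span_induction with
      | mem g hgE =>
        obtain ⟨y, z, hy, hz, rfl⟩ := hgE
        have h1 : ∫ p, (expCM y z) p ∂μ
            = ∫ ω, Real.exp (y * (V ω : ℝ) + z * (W ω : ℝ)) ∂P := by
          rw [hμ, integral_map hVW.aemeasurable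
            (expCM y z).continuous.measurable.aestronglyMeasurable]
          rfl
        have h2 : ∫ p, (expCM y z) p ∂ν
            = (∫ ω, Real.exp (y * (V ω : ℝ)) ∂P) * (∫ ω, Real.exp (z * (W ω : ℝ)) ∂P) := by
          rw [hν]
          have h3 : ∀ p : K2, (expCM y z) p
              = Real.exp (y * (p.1 : ℝ)) * Real.exp (z * (p.2 : ℝ)) := by
            intro p; simp [expCM, ← Real.exp_add]
          simp_rw [h3]
          rw [integral_prod_mul (f := fun s : I01 => Real.exp (y * (s : ℝ)))
            (g := fun t : I01 => Real.exp (z * (t : ℝ)))]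
          congr 1
          · rw [integral_map hV.aemeasurable]
            exact (Real.continuous_exp.comp (continuous_const.mul
              continuous_subtype_val)).measurable.aestronglyMeasurable
          · rw [integral_map hW.aemeasurable]
            exact (Real.continuous_exp.comp (continuous_const.mul
              continuous_subtype_val)).measurable.aestronglyMeasurable
        rw [h1, h2, H y z hy hz]
      | zero => simp
      | add a b _ _ ha hb =>
        have h4 : ∀ p : K2, ((a + b) : C(K2,ℝ)) p = a p + b p := fun p => rfl
        simp_rw [h4]
        rw [integral_add (integrable_cm μ a) (integrable_cm μ b),
          integral_add (integrable_cm ν a) (integrable_cm ν b), ha, hb]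
      | smul c a _ ha =>
        have h4 : ∀ p : K2, ((c • a) : C(K2,ℝ)) p = c * a p := fun p => rfl
        simp_rw [h4]
        rw [integral_const_mul, integral_const_mul, ha]
    have hgen : ∀ g ∈ Algebra.adjoin ℝ (expSubmonoid : Set C(K2, ℝ)),
        ∫ p, g p ∂μ = ∫ p, g p ∂ν := by
      intro g hg
      apply hspan
      have h1 := Algebra.adjoin_eq_span (R := ℝ) (s := (expSubmonoid : Set C(K2, ℝ)))
      rw [Submonoid.closure_eq] at h1
      rw [← h1]
      exact hg
    -- density step
    intro g
    have hsep : (Algebra.adjoin ℝ (expSubmonoid : Set C(K2, ℝ))).SeparatesPoints := by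
      intro p q hpq
      have : (p.1 : ℝ) ≠ (q.1 : ℝ) ∨ (p.2 : ℝ) ≠ (q.2 : ℝ) := by
        by_contra hc
        push_neg at hc
        exact hpq (Prod.ext (Subtype.ext hc.1) (Subtype.ext hc.2))
      rcases this with h | h
      · refine ⟨expCM 1 0, ⟨expCM 1 0, Algebra.subset_adjoin ⟨1, 0, zero_le_one, le_rfl, rfl⟩, rfl⟩, ?_⟩
        simp only [expCM, ContinuousMap.coe_mk]
        simp only [one_mul, zero_mul, add_zero]
        exact fun hcon => h (Real.exp_injective hcon)
      · refine ⟨expCM 0 1, ⟨expCM 0 1, Algebra.subset_adjoin ⟨0, 1, le_rfl, zero_le_one, rfl⟩, rfl⟩, ?_⟩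
        simp only [expCM, ContinuousMap.coe_mk]
        simp only [one_mul, zero_mul, zero_add]
        exact fun hcon => h (Real.exp_injective hcon)
    have hts : ∀ ε : ℝ, 0 < ε → |∫ p, g p ∂μ - ∫ p, g p ∂ν| ≤ 2 * ε := by
      intro ε hε
      obtain ⟨a, ha⟩ := ContinuousMap.exists_mem_subalgebra_near_continuousMap_of_separatesPoints
        (Algebra.adjoin ℝ (expSubmonoid : Set C(K2, ℝ))) hsep g ε hε
      have haμ : ‖∫ p, ((a : C(K2,ℝ)) p - g p) ∂μ‖ ≤ ε * (μ univ).toReal := by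
        apply norm_integral_le_of_norm_le_const
        filter_upwards with p
        calc ‖(a : C(K2,ℝ)) p - g p‖ = ‖((a : C(K2,ℝ)) - g) p‖ := rfl
          _ ≤ ‖(a : C(K2,ℝ)) - g‖ := ContinuousMap.norm_coe_le_norm _ p
          _ ≤ ε := ha.le
      have haν : ‖∫ p, ((a : C(K2,ℝ)) p - g p) ∂ν‖ ≤ ε * (ν univ).toReal := by
        apply norm_integral_le_of_norm_le_const
        filter_upwards with p
        calc ‖(a : C(K2,ℝ)) p - g p‖ = ‖((a : C(K2,ℝ)) - g) p‖ := rfl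
          _ ≤ ‖(a : C(K2,ℝ)) - g‖ := ContinuousMap.norm_coe_le_norm _ p
          _ ≤ ε := ha.le
      have hsplitμ : ∫ p, ((a : C(K2,ℝ)) p - g p) ∂μ = ∫ p, (a : C(K2,ℝ)) p ∂μ - ∫ p, g p ∂μ :=
        integral_sub (integrable_cm μ _) (integrable_cm μ _)
      have hsplitν : ∫ p, ((a : C(K2,ℝ)) p - g p) ∂ν = ∫ p, (a : C(K2,ℝ)) p ∂ν - ∫ p, g p ∂ν :=
        integral_sub (integrable_cm ν _) (integrable_cm ν _)
      have haa := hgen (a : C(K2,ℝ)) a.2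
      rw [hsplitμ] at haμ
      rw [hsplitν] at haν
      rw [measure_univ] at haμ haν
      simp only [ENNReal.toReal_one, mul_one] at haμ haν
      rw [Real.norm_eq_abs] at haμ haν
      have e1 := abs_le.mp haμ
      have e2 := abs_le.mp haν
      rw [abs_le]
      constructor <;> [skip; skip] <;> nlinarith [haa]
    by_contra hne
    have hd : 0 < |∫ p, g p ∂μ - ∫ p, g p ∂ν| := abs_pos.2 (sub_ne_zero.2 hne)
    have := hts (|∫ p, g p ∂μ - ∫ p, g p ∂ν| / 4) (by linarith)
    linarith
  -- lintegral version and conclusion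
  refine ext_of_forall_lintegral_eq_of_IsFiniteMeasure (fun f => ?_)
  have key : ∀ κ : Measure K2, IsProbabilityMeasure κ →
      ∫⁻ p, (f p : ℝ≥0∞) ∂κ = ENNReal.ofReal (∫ p, ((f p : ℝ≥0) : ℝ) ∂κ) := by
    intro κ hκ
    have hcont : Continuous (fun p => ((f p : ℝ≥0) : ℝ)) := NNReal.continuous_coe.comp f.continuous
    have hι : Integrable (fun p => ((f p : ℝ≥0) : ℝ)) κ := integrable_cm κ ⟨_, hcont⟩
    rw [ofReal_integral_eq_lintegral_ofReal hι
      (Filter.Eventually.of_forall fun p => NNReal.coe_nonneg _)]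
    congr 1
    ext p
    rw [ENNReal.ofReal_coe_nnreal]
  rw [key μ hμP, key ν hνP]
  congr 1
  exact hint ⟨_, NNReal.continuous_coe.comp f.continuous⟩

end PairSection

section ProbStuff2
variable {Ω : Type*} [MeasurableSpace Ω] (P : Measure Ω) [IsProbabilityMeasure P]
lemma indepFun_of_Iic (Y Z : Ω → ℝ) (hY : Measurable Y) (hZ : Measurable Z)
    (h : ∀ a b : ℝ, P ({ω | Y ω ≤ a} ∩ {ω | Z ω ≤ b})
      = P {ω | Y ω ≤ a} * P {ω | Z ω ≤ b}) : IndepFun Y Z P := by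
  rw [indepFun_iff_map_prod_eq_prod_map_map hY.aemeasurable hZ.aemeasurable]
  have hYZ : Measurable (fun ω => (Y ω, Z ω)) := hY.prodMk hZ
  have h1 : IsProbabilityMeasure (P.map (fun ω => (Y ω, Z ω))) :=
    Measure.isProbabilityMeasure_map hYZ.aemeasurable
  have h2 : IsProbabilityMeasure (P.map Y) := Measure.isProbabilityMeasure_map hY.aemeasurable
  have h3 : IsProbabilityMeasure (P.map Z) := Measure.isProbabilityMeasure_map hZ.aemeasurable
  have hspan : IsCountablySpanning (range (Iic : ℝ → Set ℝ)) := by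
    refine ⟨fun n => Iic (n : ℝ), fun n => ⟨n, rfl⟩, ?_⟩
    ext x
    simp only [Set.mem_iUnion, Set.mem_Iic, Set.mem_univ, iff_true]
    obtain ⟨n, hn⟩ := exists_nat_ge x
    exact ⟨n, hn⟩
  have hgen : (inferInstance : MeasurableSpace (ℝ × ℝ)) =
      generateFrom (image2 (· ×ˢ ·) (range (Iic : ℝ → Set ℝ)) (range (Iic : ℝ → Set ℝ))) := by
    conv_lhs => rw [show (inferInstance : MeasurableSpace (ℝ × ℝ)) = Prod.instMeasurableSpace from rfl]
    have hb : (inferInstance : MeasurableSpace ℝ) = generateFrom (range (Iic : ℝ → Set ℝ)) := by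
      rw [show (inferInstance : MeasurableSpace ℝ) = borel ℝ from rfl]
      exact borel_eq_generateFrom_Iic ℝ
    rw [show (Prod.instMeasurableSpace : MeasurableSpace (ℝ × ℝ)) =
      @Prod.instMeasurableSpace _ _ (generateFrom (range Iic)) (generateFrom (range Iic)) by
        rw [← hb]]
    exact generateFrom_prod_eq hspan hspan
  refine ext_of_generate_finite _ hgen (isPiSystem_Iic.prod isPiSystem_Iic) ?_ ?_
  · rintro s ⟨s1, ⟨a, rfl⟩, s2, ⟨b, rfl⟩, rfl⟩
    rw [Measure.map_apply hYZ (by exact measurableSet_Iic.prod measurableSet_Iic),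
      Measure.prod_prod, Measure.map_apply hY measurableSet_Iic,
      Measure.map_apply hZ measurableSet_Iic]
    have hp : (fun ω => (Y ω, Z ω)) ⁻¹' (Iic a ×ˢ Iic b)
        = {ω | Y ω ≤ a} ∩ {ω | Z ω ≤ b} := rfl
    rw [hp, h a b]
    rfl
  · simp


end ProbStuff2

end Stmt4Aux

end

open MeasureTheory ProbabilityTheory

/-- `γ_z^⊥(t) = z·exp(t·z) − (exp(z) − 1)`. -/
noncomputable def gammaPerp (z t : ℝ) : ℝ := z * Real.exp (t * z) - (Real.exp z - 1)

/-- For random variables `Y`, `Z` with atomless marginal laws, independence of `Y` and `Z`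
is equivalent to `E[γ_z^⊥(Z̃)·γ_y^⊥(Ỹ)] = 0` for all `(y,z) ∈ [0,1]²`, where
`Ỹ = F_Y(Y)` and `Z̃ = F_Z(Z)` are the probability integral transforms. -/
theorem stmt4 {Ω : Type*} [MeasurableSpace Ω] (P : Measure Ω) [IsProbabilityMeasure P]
    (Y Z : Ω → ℝ) (hY : Measurable Y) (hZ : Measurable Z)
    (hYatomless : ∀ a : ℝ, (P.map Y) {a} = 0)
    (hZatomless : ∀ a : ℝ, (P.map Z) {a} = 0) :
    IndepFun Y Z P ↔
      ∀ y ∈ Set.Icc (0:ℝ) 1, ∀ z ∈ Set.Icc (0:ℝ) 1,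
        ∫ ω, gammaPerp z (((P.map Z) (Set.Iic (Z ω))).toReal) *
             gammaPerp y (((P.map Y) (Set.Iic (Y ω))).toReal) ∂P = 0 := by
  classical
  open Stmt4Aux Set Real in
  have hμYP : IsProbabilityMeasure (P.map Y) := Measure.isProbabilityMeasure_map hY.aemeasurable
  have hμZP : IsProbabilityMeasure (P.map Z) := Measure.isProbabilityMeasure_map hZ.aemeasurable
  set μY := P.map Y with hμY
  set μZ := P.map Z with hμZ
  set tY : Ω → ℝ := fun ω => cdf μY (Y ω) with htYdef
  set tZ : Ω → ℝ := fun ω => cdf μZ (Z ω) with htZdef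
  have hrwY : ∀ ω, (μY (Set.Iic (Y ω))).toReal = tY ω := fun ω => (cdf_eq_real μY (Y ω)).symm
  have hrwZ : ∀ ω, (μZ (Set.Iic (Z ω))).toReal = tZ ω := fun ω => (cdf_eq_real μZ (Z ω)).symm
  simp only [hrwY, hrwZ]
  -- basic facts
  have hmtY : Measurable tY := (cdf μY).mono.measurable.comp hY
  have hmtZ : Measurable tZ := (cdf μZ).mono.measurable.comp hZ
  have htYb : ∀ ω, tY ω ∈ Icc (0:ℝ) 1 := fun ω => ⟨cdf_nonneg μY _, cdf_le_one μY _⟩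
  have htZb : ∀ ω, tZ ω ∈ Icc (0:ℝ) 1 := fun ω => ⟨cdf_nonneg μZ _, cdf_le_one μZ _⟩
  have hLY : P.map tY = volume.restrict (Icc (0:ℝ) 1) := by
    have h1 : P.map tY = μY.map (cdf μY) := by
      rw [hμY, Measure.map_map (cdf μY).mono.measurable hY]
      rfl
    rw [h1]
    exact Stmt4Aux.map_cdf_eq_uniform μY hYatomless
  have hLZ : P.map tZ = volume.restrict (Icc (0:ℝ) 1) := by
    have h1 : P.map tZ = μZ.map (cdf μZ) := by
      rw [hμZ, Measure.map_map (cdf μZ).mono.measurable hZ]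
      rfl
    rw [h1]
    exact Stmt4Aux.map_cdf_eq_uniform μZ hZatomless
  -- integrability of bounded measurable functions
  have hIbdd : ∀ (f : Ω → ℝ) (C : ℝ), Measurable f → (∀ ω, ‖f ω‖ ≤ C) → Integrable f P :=
    fun f C hf hb => (integrable_const C).mono' hf.aestronglyMeasurable
      (Filter.Eventually.of_forall hb)
  have hnormexp : ∀ (V : Ω → ℝ), (∀ ω, V ω ∈ Icc (0:ℝ) 1) → ∀ (c : ℝ) (ω : Ω),
      ‖Real.exp (c * V ω)‖ ≤ Real.exp |c| := by
    intro V hVb c ω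
    rw [Real.norm_eq_abs, abs_of_pos (Real.exp_pos _), Real.exp_le_exp]
    have h1 := (hVb ω).1; have h2 := (hVb ω).2
    rcases abs_cases c with ⟨hc1, hc2⟩ | ⟨hc1, hc2⟩ <;> nlinarith
  have hIexpY : ∀ c : ℝ, Integrable (fun ω => Real.exp (c * tY ω)) P := fun c =>
    hIbdd _ (Real.exp |c|) (Real.measurable_exp.comp (hmtY.const_mul c))
      (hnormexp tY htYb c)
  have hIexpZ : ∀ c : ℝ, Integrable (fun ω => Real.exp (c * tZ ω)) P := fun c =>
    hIbdd _ (Real.exp |c|) (Real.measurable_exp.comp (hmtZ.const_mul c))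
      (hnormexp tZ htZb c)
  -- MGF values
  have hMGF : ∀ (V : Ω → ℝ), Measurable V → P.map V = volume.restrict (Icc (0:ℝ) 1) →
      ∀ c : ℝ, c ≠ 0 → ∫ ω, Real.exp (c * V ω) ∂P = (Real.exp c - 1) / c := by
    intro V hV hLV c hc
    have h1 : ∫ ω, Real.exp (c * V ω) ∂P = ∫ t, Real.exp (c * t) ∂(P.map V) := by
      rw [integral_map hV.aemeasurable]
      exact (Real.measurable_exp.comp (measurable_id.const_mul c)).aestronglyMeasurable
    rw [h1, hLV]
    exact Stmt4Aux.exp_integral_uniform c hc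
  -- expectation of gammaPerp is zero
  have hg0 : ∀ (V : Ω → ℝ), Measurable V → (∀ ω, V ω ∈ Icc (0:ℝ) 1) →
      P.map V = volume.restrict (Icc (0:ℝ) 1) →
      ∀ c : ℝ, ∫ ω, gammaPerp c (V ω) ∂P = 0 := by
    intro V hV hVb hLV c
    rcases eq_or_ne c 0 with rfl | hc
    · simp [gammaPerp]
    · have hpt : ∀ ω, gammaPerp c (V ω) = c * Real.exp (c * V ω) - (Real.exp c - 1) := by
        intro ω
        simp only [gammaPerp, mul_comm (V ω) c]
      simp_rw [hpt]
      have hIv : Integrable (fun ω => Real.exp (c * V ω)) P :=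
        hIbdd _ (Real.exp |c|) (Real.measurable_exp.comp (hV.const_mul c)) (hnormexp V hVb c)
      rw [integral_sub (hIv.const_mul c) (integrable_const _), integral_const_mul,
        integral_const, probReal_univ, hMGF V hV hLV c hc]
      simp
      field_simp
      ring
  constructor
  · -- forward direction
    intro h y hy z hz
    have hfm : ∀ c : ℝ, Measurable (fun x : ℝ => gammaPerp c (cdf μZ x)) := by
      intro c
      have : Continuous (fun t : ℝ => gammaPerp c t) := by
        simp only [gammaPerp]
        exact (continuous_const.mul (Real.continuous_exp.comp
          (continuous_id.mul continuous_const))).sub continuous_const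
      exact this.measurable.comp (cdf μZ).mono.measurable
    have hfm' : ∀ c : ℝ, Measurable (fun x : ℝ => gammaPerp c (cdf μY x)) := by
      intro c
      have : Continuous (fun t : ℝ => gammaPerp c t) := by
        simp only [gammaPerp]
        exact (continuous_const.mul (Real.continuous_exp.comp
          (continuous_id.mul continuous_const))).sub continuous_const
      exact this.measurable.comp (cdf μY).mono.measurable
    have hind : IndepFun (fun ω => gammaPerp z (tZ ω)) (fun ω => gammaPerp y (tY ω)) P :=
      (h.symm).comp (hfm z) (hfm' y)
    have hbnd : ∀ (c : ℝ) (t : ℝ), t ∈ Icc (0:ℝ) 1 →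
        ‖gammaPerp c t‖ ≤ |c| * Real.exp |c| + |Real.exp c - 1| := by
      intro c t ht
      simp only [gammaPerp]
      calc ‖c * Real.exp (t * c) - (Real.exp c - 1)‖
          ≤ ‖c * Real.exp (t * c)‖ + ‖Real.exp c - 1‖ := norm_sub_le _ _
        _ ≤ |c| * Real.exp |c| + |Real.exp c - 1| := by
            rw [Real.norm_eq_abs, Real.norm_eq_abs, abs_mul,
              abs_of_pos (Real.exp_pos _)]
            gcongr
            have h1 := ht.1; have h2 := ht.2
            rcases abs_cases c with ⟨hc1, hc2⟩ | ⟨hc1, hc2⟩ <;> nlinarith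
    have hi1 : Integrable (fun ω => gammaPerp z (tZ ω)) P :=
      hIbdd _ _ ((hfm z).comp hZ) (fun ω => hbnd z (tZ ω) (htZb ω))
    have hi2 : Integrable (fun ω => gammaPerp y (tY ω)) P :=
      hIbdd _ _ ((hfm' y).comp hY) (fun ω => hbnd y (tY ω) (htYb ω))
    have hmul := hind.integral_mul_eq_mul_integral hi1.aestronglyMeasurable hi2.aestronglyMeasurable
    have hgoal : ∫ ω, gammaPerp z (tZ ω) * gammaPerp y (tY ω) ∂P
        = (∫ ω, gammaPerp z (tZ ω) ∂P) * ∫ ω, gammaPerp y (tY ω) ∂P := hmul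
    rw [hgoal, hg0 tZ hmtZ htZb hLZ z, zero_mul]
  · -- backward direction
    intro h
    set rJ : ℝ → ℝ → ℝ := fun y z => ∫ ω, Real.exp (y * tY ω + z * tZ ω) ∂P with hrJ
    set cJ : ℂ → ℂ → ℂ := fun w v => ∫ ω, Complex.exp (w * tY ω + v * tZ ω) ∂P with hcJ
    have hIexpYZ : ∀ y z : ℝ, Integrable (fun ω => Real.exp (y * tY ω + z * tZ ω)) P := by
      intro y z
      refine hIbdd _ (Real.exp (|y| + |z|)) ?_ ?_
      · exact Real.measurable_exp.comp ((hmtY.const_mul y).add (hmtZ.const_mul z))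
      · intro ω
        rw [Real.norm_eq_abs, abs_of_pos (Real.exp_pos _), Real.exp_le_exp]
        have h1 := (htYb ω).1; have h2 := (htYb ω).2
        have h3 := (htZb ω).1; have h4 := (htZb ω).2
        rcases abs_cases y with ⟨hc1, hc2⟩ | ⟨hc1, hc2⟩ <;>
          rcases abs_cases z with ⟨hd1, hd2⟩ | ⟨hd1, hd2⟩ <;> nlinarith
    have hJy0 : ∀ y : ℝ, rJ y 0 = ∫ ω, Real.exp (y * tY ω) ∂P := by
      intro y; rw [hrJ]; simp_rw [zero_mul, add_zero]
    have hJ0z : ∀ z : ℝ, rJ 0 z = ∫ ω, Real.exp (z * tZ ω) ∂P := by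
      intro z; rw [hrJ]; simp_rw [zero_mul, zero_add]
    -- Step A : factorization on [0,1]²
    have stepA : ∀ y ∈ Icc (0:ℝ) 1, ∀ z ∈ Icc (0:ℝ) 1, rJ y z = rJ y 0 * rJ 0 z := by
      intro y hy z hz
      rcases eq_or_ne y 0 with rfl | hy0
      · have h00 : rJ 0 0 = 1 := by
          rw [hJy0]
          simp
        rw [h00, one_mul]
      rcases eq_or_ne z 0 with rfl | hz0
      · have h00 : rJ 0 0 = 1 := by
          rw [hJ0z]
          simp
        rw [h00, mul_one]
      -- main case
      have hzero := h y hy z hz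
      set cy := Real.exp y - 1 with hcy
      set cz := Real.exp z - 1 with hcz
      have hpt : ∀ ω, gammaPerp z (tZ ω) * gammaPerp y (tY ω)
          = (z * y) * Real.exp (y * tY ω + z * tZ ω)
            - ((z * cy) * Real.exp (z * tZ ω))
            - ((y * cz) * Real.exp (y * tY ω)) + cz * cy := by
        intro ω
        simp only [gammaPerp, hcy, hcz, Real.exp_add,
          mul_comm (tZ ω) z, mul_comm (tY ω) y]
        ring
      rw [integral_congr_ae (Filter.Eventually.of_forall hpt)] at hzero
      have iYZ : Integrable (fun ω => (z * y) * Real.exp (y * tY ω + z * tZ ω)) P :=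
        (hIexpYZ y z).const_mul (z * y)
      have iZ : Integrable (fun ω => (z * cy) * Real.exp (z * tZ ω)) P :=
        (hIexpZ z).const_mul (z * cy)
      have iY : Integrable (fun ω => (y * cz) * Real.exp (y * tY ω)) P :=
        (hIexpY y).const_mul (y * cz)
      have i1 : Integrable (fun ω => (z * y) * Real.exp (y * tY ω + z * tZ ω)
          - (z * cy) * Real.exp (z * tZ ω)) P := iYZ.sub iZ
      have i2 : Integrable (fun ω => (z * y) * Real.exp (y * tY ω + z * tZ ω)
          - (z * cy) * Real.exp (z * tZ ω) - (y * cz) * Real.exp (y * tY ω)) P := i1.sub iY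
      rw [integral_add i2 (integrable_const _),
        integral_sub i1 iY,
        integral_sub iYZ iZ,
        integral_const_mul, integral_const_mul, integral_const_mul,
        integral_const, probReal_univ] at hzero
      simp only [ENNReal.toReal_one, smul_eq_mul, mul_one] at hzero
      have hMY : ∫ ω, Real.exp (y * tY ω) ∂P = cy / y := hMGF tY hmtY hLY y hy0
      have hMZ : ∫ ω, Real.exp (z * tZ ω) ∂P = cz / z := hMGF tZ hmtZ hLZ z hz0
      rw [hMY, hMZ] at hzero
      rw [hJy0, hJ0z, hMY, hMZ]
      have key : (z * y) * (∫ ω, Real.exp (y * tY ω + z * tZ ω) ∂P) = cy * cz := by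
        have e1 : z * cy * (cz / z) = cy * cz := by field_simp
        have e2 : y * cz * (cy / y) = cy * cz := by field_simp
        linear_combination hzero + e1 + e2
      rw [hrJ]
      field_simp
      linear_combination key
    -- bridge between complex and real versions
    have bridge : ∀ y z : ℝ, cJ y z = ((rJ y z : ℝ) : ℂ) := by
      intro y z
      rw [hcJ, hrJ]
      have hpt : ∀ ω, Complex.exp ((y:ℂ) * (tY ω : ℝ) + (z:ℂ) * (tZ ω : ℝ))
          = ((Real.exp (y * tY ω + z * tZ ω) : ℝ) : ℂ) := by
        intro ω
        rw [Complex.ofReal_exp]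
        push_cast
        ring_nf
      simp only [hpt]
      exact integral_ofReal
    -- complex differentiability
    have hd1 : ∀ v : ℂ, Differentiable ℂ (fun w => cJ w v) := by
      intro v
      rw [hcJ]
      exact Stmt4Aux.diff_cexp_integral P hmtY hmtZ htYb htZb v
    have hd2 : ∀ w : ℂ, Differentiable ℂ (fun v => cJ w v) := by
      intro w
      have h1 := Stmt4Aux.diff_cexp_integral P hmtZ hmtY htZb htYb w
      have h2 : (fun v => cJ w v) = (fun v : ℂ => ∫ ω, Complex.exp (v * tZ ω + w * tY ω) ∂P) := by
        funext v
        rw [hcJ]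
        exact integral_congr_ae (Filter.Eventually.of_forall fun ω => by ring_nf)
      rw [h2]
      exact h1
    -- stage 1: continuation in the first variable
    have stage1 : ∀ z : ℝ, z ∈ Icc (0:ℝ) 1 → ∀ w : ℂ, cJ w z = cJ w 0 * cJ 0 z := by
      intro z hz
      refine Stmt4Aux.entire_eq_of_eq_on_Icc (hd1 z) ((hd1 0).mul_const _) ?_
      intro x hx
      have hx01 : x ∈ Icc (0:ℝ) 1 := ⟨by linarith [hx.1], hx.2⟩
      have h1 := stepA x hx01 z hz
      calc cJ x z = ((rJ x z : ℝ) : ℂ) := bridge x z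
        _ = ((rJ x 0 * rJ 0 z : ℝ) : ℂ) := by rw [h1]
        _ = ((rJ x 0 : ℝ) : ℂ) * ((rJ 0 z : ℝ) : ℂ) := by push_cast; ring
        _ = cJ x 0 * cJ 0 z := by
            rw [← bridge x 0, ← bridge 0 z]
            push_cast
            norm_num
    -- stage 2: continuation in the second variable
    have stage2 : ∀ y z : ℝ, cJ y z = cJ y 0 * cJ 0 z := by
      intro y z
      have key := Stmt4Aux.entire_eq_of_eq_on_Icc (f := fun v => cJ (y:ℂ) v)
        (g := fun v => cJ (y:ℂ) 0 * cJ 0 v) (hd2 (y:ℂ)) ((hd2 0).const_mul _) ?_ ((z:ℝ) : ℂ)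
      · exact key
      · intro x hx
        have hx01 : x ∈ Icc (0:ℝ) 1 := ⟨by linarith [hx.1], hx.2⟩
        exact stage1 x hx01 (y:ℂ)
    -- real factorization everywhere
    have hfact : ∀ y z : ℝ, rJ y z = rJ y 0 * rJ 0 z := by
      intro y z
      have := stage2 y z
      rw [bridge y z] at this
      have h2 : cJ (y:ℂ) 0 * cJ 0 (z:ℂ) = ((rJ y 0 * rJ 0 z : ℝ) : ℂ) := by
        have e1 : ((0:ℝ) : ℂ) = (0 : ℂ) := by norm_num
        rw [← e1, bridge y 0, bridge 0 z]
        push_cast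
        ring
      rw [h2] at this
      exact_mod_cast this
    -- apply the product-measure identification
    set V : Ω → Stmt4Aux.I01 := fun ω => ⟨tY ω, htYb ω⟩ with hV
    set W : Ω → Stmt4Aux.I01 := fun ω => ⟨tZ ω, htZb ω⟩ with hW
    have hVm : Measurable V := hmtY.subtype_mk
    have hWm : Measurable W := hmtZ.subtype_mk
    have hmap := Stmt4Aux.map_pair_eq_prod P V W hVm hWm ?_
    swap
    · intro y z hy0 hz0
      have h1 := hfact y z
      rw [hJy0, hJ0z] at h1
      exact h1
    have hIndepSub : IndepFun V W P :=
      (indepFun_iff_map_prod_eq_prod_map_map hVm.aemeasurable hWm.aemeasurable).mpr hmap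
    have hIndep : IndepFun tY tZ P :=
      hIndepSub.comp measurable_subtype_coe measurable_subtype_coe
    -- conclude independence of Y and Z
    apply Stmt4Aux.indepFun_of_Iic P Y Z hY hZ
    intro a b
    have e1 : {ω | Y ω ≤ a} =ᵐ[P] {ω | tY ω ≤ cdf μY a} :=
      Stmt4Aux.events_ae_eq μY P Y hY hμY.symm hYatomless a
    have e2 : {ω | Z ω ≤ b} =ᵐ[P] {ω | tZ ω ≤ cdf μZ b} :=
      Stmt4Aux.events_ae_eq μZ P Z hZ hμZ.symm hZatomless b
    rw [measure_congr (e1.inter e2), measure_congr e1, measure_congr e2]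
    have := hIndep.measure_inter_preimage_eq_mul (Iic (cdf μY a)) (Iic (cdf μZ b))
      measurableSet_Iic measurableSet_Iic
    exact this
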